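/- arXiv:1908.04432 — 6 statements merged into one kernel-verified Lean document; each statement's English description precedes it below -/
import Mathlib

section
/- Two probability mass functions Q1 and Q2 on a finite nonempty type Y are objectively compatible if and only if their supports intersect, i.e. there exists y : Y with Q1 y > 0 and Q2 y > 0. -/
/-- A probability mass function on a finite type: nonnegative and summing to 1. -/
def IsPmf {Z : Type} [Fintype Z] (P : Z → ℝ) : Prop :=
  (∀ z, 0 ≤ P z) ∧ ∑ z, P z = 1

/-- Objective compatibility of two probability assignments `Q1`, `Q2` on `Y`:
there exist finite nonempty types `X1`, `X2`, a joint pmf `P` on `Y × X1 × X2`,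
and outcomes `x1`, `x2` occurring with positive probability, such that each `Qᵢ`
is the conditional distribution of `Y` given `Xᵢ = xᵢ`. -/
def ObjCompatible {Y : Type} [Fintype Y] (Q1 Q2 : Y → ℝ) : Prop :=
  ∃ (X1 : Type) (_ : Fintype X1) (X2 : Type) (_ : Fintype X2),
    Nonempty X1 ∧ Nonempty X2 ∧
    ∃ (P : Y × X1 × X2 → ℝ) (x1 : X1) (x2 : X2),
      IsPmf P ∧
      0 < ∑ y, P (y, x1, x2) ∧
      (∀ y, Q1 y = (∑ x2', P (y, x1, x2')) / (∑ y', ∑ x2', P (y', x1, x2'))) ∧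
      (∀ y, Q2 y = (∑ x1', P (y, x1', x2)) / (∑ y', ∑ x1', P (y', x1', x2)))

/-- Auxiliary joint distribution used in the converse construction. -/
noncomputable def auxP {Y : Type} [DecidableEq Y] (Q1 Q2 : Y → ℝ) (y0 : Y) (ε : ℝ) :
    Y × Bool × Bool → ℝ
  | (y, true, true) => if y = y0 then ε else 0
  | (y, true, false) => Q1 y / 4 - (if y = y0 then ε else 0)
  | (y, false, true) => Q2 y / 4 - (if y = y0 then ε else 0)
  | (y, false, false) => if y = y0 then 1/2 + ε else 0

/-- Two pmfs on a finite nonempty type are objectively compatible iff their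
supports intersect. -/
theorem objCompatible_iff_supports_intersect
    {Y : Type} [Fintype Y] [Nonempty Y] (Q1 Q2 : Y → ℝ)
    (hQ1 : IsPmf Q1) (hQ2 : IsPmf Q2) :
    ObjCompatible Q1 Q2 ↔ ∃ y : Y, 0 < Q1 y ∧ 0 < Q2 y := by
  constructor
  · rintro ⟨X1, _, X2, _, _, _, P, x1, x2, hP, hpos, h1, h2⟩
    obtain ⟨y, hy⟩ : ∃ y, 0 < P (y, x1, x2) := by
      by_contra h
      push_neg at h
      exact absurd (Finset.sum_nonpos (fun y _ => h y)) (not_le.mpr hpos)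
    refine ⟨y, ?_, ?_⟩
    · rw [h1 y]
      apply div_pos
      · exact lt_of_lt_of_le hy (Finset.single_le_sum (f := fun i => P (y, x1, i)) (fun i _ => hP.1 _) (Finset.mem_univ x2))
      · refine lt_of_lt_of_le hy ?_
        calc P (y, x1, x2) ≤ ∑ x2', P (y, x1, x2') :=
              Finset.single_le_sum (f := fun i => P (y, x1, i)) (fun i _ => hP.1 _) (Finset.mem_univ x2)
          _ ≤ ∑ y', ∑ x2', P (y', x1, x2') :=
              Finset.single_le_sum (f := fun y' => ∑ x2', P (y', x1, x2'))
                (fun i _ => Finset.sum_nonneg fun j _ => hP.1 _) (Finset.mem_univ y)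
    · rw [h2 y]
      apply div_pos
      · exact lt_of_lt_of_le hy (Finset.single_le_sum (f := fun i => P (y, i, x2)) (fun i _ => hP.1 _) (Finset.mem_univ x1))
      · refine lt_of_lt_of_le hy ?_
        calc P (y, x1, x2) ≤ ∑ x1', P (y, x1', x2) :=
              Finset.single_le_sum (f := fun i => P (y, i, x2)) (fun i _ => hP.1 _) (Finset.mem_univ x1)
          _ ≤ ∑ y', ∑ x1', P (y', x1', x2) :=
              Finset.single_le_sum (f := fun y' => ∑ x1', P (y', x1', x2))
                (fun i _ => Finset.sum_nonneg fun j _ => hP.1 _) (Finset.mem_univ y)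
  · rintro ⟨y0, hy1, hy2⟩
    classical
    set ε : ℝ := min (Q1 y0) (Q2 y0) / 4 with hεdef
    have hε0 : 0 < ε := by
      have := lt_min hy1 hy2
      positivity
    have hε1 : ε ≤ Q1 y0 / 4 := by
      have := min_le_left (Q1 y0) (Q2 y0); rw [hεdef]; linarith
    have hε2 : ε ≤ Q2 y0 / 4 := by
      have := min_le_right (Q1 y0) (Q2 y0); rw [hεdef]; linarith
    set P : Y × Bool × Bool → ℝ := auxP Q1 Q2 y0 ε with hPdef
    have hPnn : ∀ p, 0 ≤ P p := by
      rintro ⟨y, b1, b2⟩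
      have h1 := hQ1.1 y
      have h2 := hQ2.1 y
      cases b1 <;> cases b2 <;> simp only [hPdef, auxP] <;> split_ifs with h <;>
        first
          | linarith
          | (subst h; linarith)
    have hs1 : ∀ y, ∑ x2' : Bool, P (y, true, x2') = Q1 y / 4 := by
      intro y
      simp only [hPdef, Fintype.sum_bool, auxP]
      ring
    have hs2 : ∀ y, ∑ x1' : Bool, P (y, x1', true) = Q2 y / 4 := by
      intro y
      simp only [hPdef, Fintype.sum_bool, auxP]
      ring
    have hd1 : ∑ y', ∑ x2' : Bool, P (y', true, x2') = 1/4 := by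
      rw [Finset.sum_congr rfl (fun y _ => hs1 y), ← Finset.sum_div, hQ1.2]
    have hd2 : ∑ y', ∑ x1' : Bool, P (y', x1', true) = 1/4 := by
      rw [Finset.sum_congr rfl (fun y _ => hs2 y), ← Finset.sum_div, hQ2.2]
    have hsum : ∑ p : Y × Bool × Bool, P p = 1 := by
      rw [Fintype.sum_prod_type]
      have key : ∀ y : Y, ∑ q : Bool × Bool, P (y, q) =
          Q1 y / 4 + Q2 y / 4 + (if y = y0 then (1:ℝ)/2 else 0) := by
        intro y
        rw [Fintype.sum_prod_type]
        simp only [hPdef, Fintype.sum_bool, auxP]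
        split_ifs <;> ring
      rw [Finset.sum_congr rfl (fun y _ => key y), Finset.sum_add_distrib,
        Finset.sum_add_distrib, Finset.sum_ite_eq' Finset.univ y0 (fun _ => (1:ℝ)/2),
        ← Finset.sum_div, ← Finset.sum_div, hQ1.2, hQ2.2]
      norm_num
    have hmarg : ∑ y, P (y, true, true) = ε := by
      simp only [hPdef, auxP]
      rw [Finset.sum_ite_eq' Finset.univ y0 (fun _ => ε)]
      simp
    refine ⟨Bool, inferInstance, Bool, inferInstance, ⟨true⟩, ⟨true⟩,
      P, true, true, ⟨hPnn, hsum⟩, ?_, ?_, ?_⟩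
    · rw [hmarg]; exact hε0
    · intro y
      rw [hs1 y, hd1]
      ring
    · intro y
      rw [hs2 y, hd2]
      ring
end

section
/- Two probability mass functions Q1 and Q2 on a finite nonempty type Y are subjectively compatible if and only if their supports intersect, i.e. there exists y : Y with Q1 y > 0 and Q2 y > 0. -/
/-- Subjective compatibility of two probability assignments `Q1`, `Q2` on `Y`:
there exist a finite nonempty type `X` and a stochastic kernel `K : Y → X → ℝ`
such that every outcome `x` has positive predicted probability under both
assignments, and the Bayesian updates of `Q1` and `Q2` agree on some outcome `xt`. -/
def SubjCompatible {Y : Type} [Fintype Y] (Q1 Q2 : Y → ℝ) : Prop :=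
  ∃ (X : Type) (_ : Fintype X),
    Nonempty X ∧
    ∃ K : Y → X → ℝ,
      (∀ y x, 0 ≤ K y x) ∧
      (∀ y, ∑ x, K y x = 1) ∧
      (∀ x, 0 < ∑ y, K y x * Q1 y ∧ 0 < ∑ y, K y x * Q2 y) ∧
      ∃ xt : X, ∀ y,
        (K y xt * Q1 y) / (∑ y', K y' xt * Q1 y') =
        (K y xt * Q2 y) / (∑ y', K y' xt * Q2 y')

/-- Two pmfs on a finite nonempty type are subjectively compatible iff their
supports intersect. -/
theorem subjCompatible_iff_supports_intersect
    {Y : Type} [Fintype Y] [Nonempty Y] (Q1 Q2 : Y → ℝ)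
    (hQ1 : IsPmf Q1) (hQ2 : IsPmf Q2) :
    SubjCompatible Q1 Q2 ↔ ∃ y : Y, 0 < Q1 y ∧ 0 < Q2 y := by
  constructor
  · rintro ⟨X, _, ⟨hne⟩, K, hK0, hKsum, hpos, xt, hagree⟩
    have hS1 : 0 < ∑ y, K y xt * Q1 y := (hpos xt).1
    have hS2 : 0 < ∑ y, K y xt * Q2 y := (hpos xt).2
    obtain ⟨y, -, hy⟩ : ∃ y ∈ Finset.univ, 0 < K y xt * Q1 y := by
      by_contra h
      push_neg at h
      have : ∑ y, K y xt * Q1 y ≤ 0 :=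
        Finset.sum_nonpos fun y hyu => le_of_not_gt (by simpa using h y (hyu))
      linarith
    have hQ1y : 0 < Q1 y := by
      by_contra hc
      push_neg at hc
      nlinarith [hK0 y xt]
    have h := hagree y
    have hlhs : 0 < (K y xt * Q1 y) / (∑ y', K y' xt * Q1 y') := div_pos hy hS1
    rw [h] at hlhs
    have hnum : 0 < K y xt * Q2 y := by
      by_contra hc
      push_neg at hc
      have : (K y xt * Q2 y) / (∑ y', K y' xt * Q2 y') ≤ 0 :=
        div_nonpos_iff.mpr (Or.inr ⟨hc, le_of_lt hS2⟩)
      linarith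
    refine ⟨y, hQ1y, ?_⟩
    by_contra hc
    push_neg at hc
    nlinarith [hK0 y xt]
  · rintro ⟨y0, h1, h2⟩
    classical
    refine ⟨Bool, inferInstance, ⟨true⟩,
      (fun y x => if y = y0 then (1:ℝ)/2 else (if x then 0 else 1)), ?_, ?_, ?_, ?_⟩
    · intro y x
      dsimp only
      split
      · norm_num
      · split <;> norm_num
    · intro y; rw [Fintype.sum_bool]; dsimp only; split <;> norm_num
    · have hsumT : ∀ Q : Y → ℝ,
          (∑ y, (if y = y0 then (1:ℝ)/2 else (if true = true then 0 else 1)) * Q y)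
            = (1/2) * Q y0 := by
        intro Q
        simp [ite_mul, Finset.sum_ite_eq']
      have hsumF : ∀ Q : Y → ℝ, (∀ z, 0 ≤ Q z) → ∑ z, Q z = 1 →
          0 < ∑ y, (if y = y0 then (1:ℝ)/2 else (if false = true then 0 else 1)) * Q y := by
        intro Q hQ0 hQs
        have heq : ∑ y, (if y = y0 then (1:ℝ)/2 else (if false = true then 0 else 1)) * Q y
            = ∑ y, (Q y - (if y = y0 then (1/2) * Q y0 else 0)) := by
          apply Finset.sum_congr rfl
          intro y _
          by_cases h : y = y0 <;> simp [h] <;> ring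
        rw [heq, Finset.sum_sub_distrib, hQs]
        simp only [Finset.sum_ite_eq', Finset.mem_univ, if_pos]
        have hle : Q y0 ≤ 1 := by
          rw [← hQs]
          exact Finset.single_le_sum (fun z _ => hQ0 z) (Finset.mem_univ y0)
        linarith
      intro x
      cases x
      · exact ⟨hsumF Q1 hQ1.1 hQ1.2, hsumF Q2 hQ2.1 hQ2.2⟩
      · constructor
        · rw [hsumT Q1]; linarith
        · rw [hsumT Q2]; linarith
    · refine ⟨true, fun y => ?_⟩
      have hsumT : ∀ Q : Y → ℝ,
          (∑ y', (if y' = y0 then (1:ℝ)/2 else (if true = true then 0 else 1)) * Q y')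
            = (1/2) * Q y0 := by
        intro Q
        simp [ite_mul, Finset.sum_ite_eq']
      rw [hsumT Q1, hsumT Q2]
      by_cases h : y = y0
      · subst h
        dsimp only
        rw [if_pos rfl]
        rw [div_self (by linarith), div_self (by linarith)]
      · simp [h]
end

section
/- For probability mass functions Q1 and Q2 on a finite nonempty type Y, objective compatibility holds if and only if subjective compatibility holds. -/
/-- Objective compatibility implies the supports of the two pmfs intersect. -/
lemma overlap_of_obj {Y : Type} [Fintype Y] {Q1 Q2 : Y → ℝ}
    (h : ObjCompatible Q1 Q2) : ∃ y, 0 < Q1 y ∧ 0 < Q2 y := by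
  obtain ⟨X1, _, X2, _, _, _, P, x1, x2, ⟨hP0, _⟩, hpos, h1, h2⟩ := h
  obtain ⟨y0, -, hy0⟩ : ∃ y ∈ Finset.univ, 0 < P (y, x1, x2) := by
    by_contra hcon
    push_neg at hcon
    have : ∑ y, P (y, x1, x2) ≤ 0 :=
      Finset.sum_nonpos fun y hy => hcon y hy
    linarith
  refine ⟨y0, ?_, ?_⟩
  · rw [h1 y0]
    have hnum : 0 < ∑ x2', P (y0, x1, x2') :=
      lt_of_lt_of_le hy0 (Finset.single_le_sum (fun x _ => hP0 (y0, x1, x)) (Finset.mem_univ x2))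
    have hden : 0 < ∑ y', ∑ x2', P (y', x1, x2') :=
      lt_of_lt_of_le hnum (Finset.single_le_sum
        (fun y _ => Finset.sum_nonneg fun x _ => hP0 (y, x1, x)) (Finset.mem_univ y0))
    exact div_pos hnum hden
  · rw [h2 y0]
    have hnum : 0 < ∑ x1', P (y0, x1', x2) :=
      lt_of_lt_of_le hy0 (Finset.single_le_sum (fun x _ => hP0 (y0, x, x2)) (Finset.mem_univ x1))
    have hden : 0 < ∑ y', ∑ x1', P (y', x1', x2) :=
      lt_of_lt_of_le hnum (Finset.single_le_sum
        (fun y _ => Finset.sum_nonneg fun x _ => hP0 (y, x, x2)) (Finset.mem_univ y0))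
    exact div_pos hnum hden

/-- Subjective compatibility implies the supports of the two pmfs intersect. -/
lemma overlap_of_subj {Y : Type} [Fintype Y] {Q1 Q2 : Y → ℝ}
    (hQ1 : IsPmf Q1) (hQ2 : IsPmf Q2)
    (h : SubjCompatible Q1 Q2) : ∃ y, 0 < Q1 y ∧ 0 < Q2 y := by
  obtain ⟨X, _, _, K, hK0, _, hKpos, xt, hpost⟩ := h
  obtain ⟨S1pos, S2pos⟩ := hKpos xt
  obtain ⟨y0, -, hy0⟩ : ∃ y ∈ Finset.univ, 0 < K y xt * Q1 y := by
    by_contra hcon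
    push_neg at hcon
    have : ∑ y, K y xt * Q1 y ≤ 0 :=
      Finset.sum_nonpos fun y hy => hcon y hy
    linarith
  have hQ1pos : 0 < Q1 y0 := by
    rcases (mul_pos_iff.mp hy0) with ⟨_, h⟩ | ⟨h, _⟩
    · exact h
    · exact absurd (hK0 y0 xt) (not_le.mpr h)
  have hKy0 : 0 < K y0 xt := by
    rcases (mul_pos_iff.mp hy0) with ⟨h, _⟩ | ⟨_, h⟩
    · exact h
    · exact absurd (hQ1.1 y0) (not_le.mpr h)
  have heq := hpost y0
  have hL : 0 < (K y0 xt * Q1 y0) / (∑ y', K y' xt * Q1 y') := div_pos hy0 S1pos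
  rw [heq] at hL
  have hnum : 0 < K y0 xt * Q2 y0 := by
    by_contra hcon
    push_neg at hcon
    have : (K y0 xt * Q2 y0) / (∑ y', K y' xt * Q2 y') ≤ 0 :=
      div_nonpos_of_nonpos_of_nonneg hcon (le_of_lt S2pos)
    linarith
  have hQ2pos : 0 < Q2 y0 := by
    by_contra hcon
    push_neg at hcon
    nlinarith [hK0 y0 xt]
  exact ⟨y0, hQ1pos, hQ2pos⟩

/-- Support overlap implies subjective compatibility. -/
lemma subj_of_overlap {Y : Type} [Fintype Y] {Q1 Q2 : Y → ℝ}
    (hQ1 : IsPmf Q1) (hQ2 : IsPmf Q2)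
    (h : ∃ y, 0 < Q1 y ∧ 0 < Q2 y) : SubjCompatible Q1 Q2 := by
  classical
  obtain ⟨y0, h1, h2⟩ := h
  have hQ1le : Q1 y0 ≤ 1 := by
    rw [← hQ1.2]
    exact Finset.single_le_sum (fun y _ => hQ1.1 y) (Finset.mem_univ y0)
  have hQ2le : Q2 y0 ≤ 1 := by
    rw [← hQ2.2]
    exact Finset.single_le_sum (fun y _ => hQ2.1 y) (Finset.mem_univ y0)
  refine ⟨Bool, inferInstance, ⟨true⟩,
    fun y b => if b then (if y = y0 then (1/2:ℝ) else 0) else (if y = y0 then (1/2:ℝ) else 1),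
    ?_, ?_, ?_, ?_⟩
  · intro y x
    cases x <;> simp <;> split <;> norm_num
  · intro y
    rw [Fintype.sum_bool]
    by_cases hy : y = y0 <;> simp [hy] <;> norm_num
  · intro x
    have htrue : ∀ Q : Y → ℝ,
        ∑ y, (if y = y0 then (1/2:ℝ) else 0) * Q y = Q y0 / 2 := by
      intro Q
      simp [ite_mul]
      ring
    have hfalse : ∀ Q : Y → ℝ, (∑ y, Q y = 1) →
        ∑ y, (if y = y0 then (1/2:ℝ) else 1) * Q y = 1 - Q y0 / 2 := by
      intro Q hs
      have : ∀ y, (if y = y0 then (1/2:ℝ) else 1) * Q y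
          = Q y - (if y = y0 then Q y / 2 else 0) := by
        intro y
        split <;> ring
      rw [Finset.sum_congr rfl fun y _ => this y, Finset.sum_sub_distrib, hs]
      simp
    cases x with
    | true =>
      constructor
      · show 0 < ∑ y, (if y = y0 then (1/2:ℝ) else 0) * Q1 y
        rw [htrue Q1]; linarith
      · show 0 < ∑ y, (if y = y0 then (1/2:ℝ) else 0) * Q2 y
        rw [htrue Q2]; linarith
    | false =>
      constructor
      · show 0 < ∑ y, (if y = y0 then (1/2:ℝ) else 1) * Q1 y
        rw [hfalse Q1 hQ1.2]; linarith
      · show 0 < ∑ y, (if y = y0 then (1/2:ℝ) else 1) * Q2 y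
        rw [hfalse Q2 hQ2.2]; linarith
  · refine ⟨true, fun y => ?_⟩
    have htrue : ∀ Q : Y → ℝ,
        ∑ y', (if y' = y0 then (1/2:ℝ) else 0) * Q y' = Q y0 / 2 := by
      intro Q
      simp [ite_mul]
      ring
    show (if y = y0 then (1/2:ℝ) else 0) * Q1 y / (∑ y', (if y' = y0 then (1/2:ℝ) else 0) * Q1 y')
      = (if y = y0 then (1/2:ℝ) else 0) * Q2 y / (∑ y', (if y' = y0 then (1/2:ℝ) else 0) * Q2 y')
    rw [htrue Q1, htrue Q2]
    by_cases hy : y = y0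
    · subst hy
      rw [if_pos rfl]
      field_simp
    · rw [if_neg hy]
      simp

/-- Support overlap implies objective compatibility. -/
lemma obj_of_overlap {Y : Type} [Fintype Y] [Nonempty Y] {Q1 Q2 : Y → ℝ}
    (hQ1 : IsPmf Q1) (hQ2 : IsPmf Q2)
    (h : ∃ y, 0 < Q1 y ∧ 0 < Q2 y) : ObjCompatible Q1 Q2 := by
  classical
  obtain ⟨y0, h1, h2⟩ := h
  set c : ℝ := min (Q1 y0) (Q2 y0) / 4 with hc_def
  have hc : 0 < c := by
    apply div_pos _ (by norm_num)
    exact lt_min h1 h2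
  have hc1 : c ≤ Q1 y0 / 4 := by
    apply div_le_div_of_nonneg_right (min_le_left _ _)
    norm_num
  have hc2 : c ≤ Q2 y0 / 4 := by
    apply div_le_div_of_nonneg_right (min_le_right _ _)
    norm_num
  have hn : (0:ℝ) < (Fintype.card Y : ℝ) := by
    have := Fintype.card_pos (α := Y)
    positivity
  set P : Y × Bool × Bool → ℝ := fun p =>
    if p.2.1 then
      (if p.2.2 then (if p.1 = y0 then c else 0)
       else Q1 p.1 / 4 - (if p.1 = y0 then c else 0))
    else
      (if p.2.2 then Q2 p.1 / 4 - (if p.1 = y0 then c else 0)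
       else (1/2 + c) / (Fintype.card Y : ℝ)) with hP_def
  have hPtt : ∀ y, P (y, true, true) = (if y = y0 then c else 0) := fun y => rfl
  have hPtf : ∀ y, P (y, true, false) = Q1 y / 4 - (if y = y0 then c else 0) := fun y => rfl
  have hPft : ∀ y, P (y, false, true) = Q2 y / 4 - (if y = y0 then c else 0) := fun y => rfl
  have hPff : ∀ y, P (y, false, false) = (1/2 + c) / (Fintype.card Y : ℝ) := fun y => rfl
  have key1 : ∀ y, ∑ x2' : Bool, P (y, true, x2') = Q1 y / 4 := by
    intro y
    rw [Fintype.sum_bool, hPtt, hPtf]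
    ring
  have key2 : ∀ y, ∑ x1' : Bool, P (y, x1', true) = Q2 y / 4 := by
    intro y
    rw [Fintype.sum_bool, hPtt, hPft]
    ring
  have sum1 : ∑ y, ∑ x2' : Bool, P (y, true, x2') = 1/4 := by
    rw [Finset.sum_congr rfl fun y _ => key1 y, ← Finset.sum_div, hQ1.2]
  have sum2 : ∑ y, ∑ x1' : Bool, P (y, x1', true) = 1/4 := by
    rw [Finset.sum_congr rfl fun y _ => key2 y, ← Finset.sum_div, hQ2.2]
  refine ⟨Bool, inferInstance, Bool, inferInstance, ⟨true⟩, ⟨true⟩,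
    P, true, true, ⟨?_, ?_⟩, ?_, ?_, ?_⟩
  · rintro ⟨y, b1, b2⟩
    cases b1 <;> cases b2
    · rw [hPff]; positivity
    · rw [hPft]
      by_cases hy : y = y0
      · subst hy; rw [if_pos rfl]; linarith
      · rw [if_neg hy]; simp; linarith [hQ2.1 y]
    · rw [hPtf]
      by_cases hy : y = y0
      · subst hy; rw [if_pos rfl]; linarith
      · rw [if_neg hy]; simp; linarith [hQ1.1 y]
    · rw [hPtt]; split <;> [linarith; rfl]
  · rw [Fintype.sum_prod_type]
    have : ∀ y, ∑ x : Bool × Bool, P (y, x) =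
        Q1 y / 4 + Q2 y / 4 - (if y = y0 then c else 0)
          + (1/2 + c) / (Fintype.card Y : ℝ) := by
      intro y
      rw [Fintype.sum_prod_type, Fintype.sum_bool, Fintype.sum_bool, Fintype.sum_bool,
        hPtt, hPtf, hPft, hPff]
      ring
    rw [Finset.sum_congr rfl fun y _ => this y]
    rw [Finset.sum_add_distrib, Finset.sum_sub_distrib, Finset.sum_add_distrib,
      ← Finset.sum_div, ← Finset.sum_div, hQ1.2, hQ2.2]
    rw [Finset.sum_ite_eq' Finset.univ y0 (fun _ => c)]
    rw [Finset.sum_const, Finset.card_univ, nsmul_eq_mul]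
    have hne : (Fintype.card Y : ℝ) ≠ 0 := ne_of_gt hn
    rw [if_pos (Finset.mem_univ y0)]
    field_simp
    ring
  · rw [Finset.sum_congr rfl fun y (_ : y ∈ Finset.univ) => hPtt y]
    rw [Finset.sum_ite_eq' Finset.univ y0 (fun _ => c)]
    simpa using hc
  · intro y
    rw [key1 y, sum1]
    ring
  · intro y
    rw [key2 y, sum2]
    ring

/-- For pmfs on a finite nonempty type, objective and subjective compatibility
are equivalent. -/
theorem objCompatible_iff_subjCompatible
    {Y : Type} [Fintype Y] [Nonempty Y] (Q1 Q2 : Y → ℝ)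
    (hQ1 : IsPmf Q1) (hQ2 : IsPmf Q2) :
    ObjCompatible Q1 Q2 ↔ SubjCompatible Q1 Q2 := by
  constructor
  · intro h
    exact subj_of_overlap hQ1 hQ2 (overlap_of_obj h)
  · intro h
    exact obj_of_overlap hQ1 hQ2 (overlap_of_subj hQ1 hQ2 h)
end

section
/- Let Y be a two-element type and let Q1 = (p, 1 - p) and Q2 = (q, 1 - q) be two pmfs on Y with p ≠ q. If p and q both lie in the open interval (0, 1), then Q1 and Q2 are objectively compatible. -/
/-- On a two-element type, the pmfs `(p, 1 - p)` and `(q, 1 - q)` with `p ≠ q`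
and `p, q ∈ (0, 1)` are objectively compatible. -/
theorem objCompatible_of_interior
    (p q : ℝ) (hpq : p ≠ q) (hp : p ∈ Set.Ioo (0 : ℝ) 1) (hq : q ∈ Set.Ioo (0 : ℝ) 1) :
    ObjCompatible (![p, 1 - p] : Fin 2 → ℝ) (![q, 1 - q] : Fin 2 → ℝ) := by
  obtain ⟨hp0, hp1⟩ := hp
  obtain ⟨hq0, hq1⟩ := hq
  set t : ℝ := min p (1 - p) with ht
  have ht0 : 0 < t := lt_min hp0 (by linarith)
  have htp : t ≤ p := min_le_left _ _
  have htp' : t ≤ 1 - p := min_le_right _ _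
  refine ⟨Fin 1, inferInstance, Fin 2, inferInstance, ⟨0⟩, ⟨0⟩,
    (fun z => if z.2.2 = 0 then t * (![q, 1 - q] : Fin 2 → ℝ) z.1
      else (![p, 1 - p] : Fin 2 → ℝ) z.1 - t * (![q, 1 - q] : Fin 2 → ℝ) z.1),
    0, 0, ⟨?_, ?_⟩, ?_, ?_, ?_⟩
  · rintro ⟨y, x1, x2⟩
    fin_cases y <;> fin_cases x2 <;> simp <;> nlinarith
  · simp only [Fintype.sum_prod_type, Fin.sum_univ_two, Fin.sum_univ_one]
    norm_num
  · simp [Fin.sum_univ_two]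
    nlinarith
  · have htne : t ≠ 0 := ht0.ne'
    intro y
    fin_cases y <;>
      simp [Fin.sum_univ_two, Fin.sum_univ_one] <;> field_simp <;> ring
  · have htne : t ≠ 0 := ht0.ne'
    have hcancel : t * t⁻¹ = 1 := mul_inv_cancel₀ htne
    intro y
    fin_cases y <;>
      simp [Fin.sum_univ_two, Fin.sum_univ_one] <;>
      rw [show t * q + t * (1 - q) = t from by ring] <;>
      field_simp <;> ring
end

section
/- Let Y be a finite nonempty type and let Q1 be the uniform pmf on Y, i.e. Q1 y = 1 / |Y| for every y. Then Q1 is objectively compatible with every pmf Q2 on Y. -/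
/-- The uniform pmf on a finite nonempty type is objectively compatible with
every pmf. -/
theorem uniform_objCompatible
    {Y : Type} [Fintype Y] [Nonempty Y] (Q2 : Y → ℝ) (hQ2 : IsPmf Q2) :
    ObjCompatible (fun _ : Y => 1 / (Fintype.card Y : ℝ)) Q2 := by
  obtain ⟨hpos, hsum⟩ := hQ2
  set n : ℝ := (Fintype.card Y : ℝ) with hn
  have hn0 : 0 < n := by
    simp [hn, Fintype.card_pos]
  have hQle : ∀ y, Q2 y ≤ 1 := by
    intro y
    rw [← hsum]
    exact Finset.single_le_sum (fun i _ => hpos i) (Finset.mem_univ y)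
  refine ⟨Unit, inferInstance, Bool, inferInstance, ⟨()⟩, ⟨true⟩,
    (fun p => (if p.2.2 then Q2 p.1 else 1 - Q2 p.1) / n), (), true, ?_, ?_, ?_, ?_⟩
  · constructor
    · rintro ⟨y, u, b⟩
      cases b <;> simp only [if_true, if_false] <;>
        exact div_nonneg (by simp [hpos y, sub_nonneg, hQle y]) hn0.le
    · rw [Fintype.sum_prod_type]
      have : ∀ y : Y, (∑ p : Unit × Bool,
          (if p.2 then Q2 y else 1 - Q2 y) / n) = 1 / n := by
        intro y
        rw [Fintype.sum_prod_type]
        simp [Fintype.sum_bool]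
        ring
      rw [Finset.sum_congr rfl (fun y _ => this y), Finset.sum_const,
        Finset.card_univ, nsmul_eq_mul]
      field_simp
      exact hn.symm
  · simp only [if_true]
    rw [← Finset.sum_div, hsum]
    positivity
  · intro y
    have hrow : ∀ y : Y, (∑ b : Bool, (if b then Q2 y else 1 - Q2 y) / n) = 1 / n := by
      intro y; simp [Fintype.sum_bool]; ring
    simp only [hrow]
    rw [Finset.sum_const, Finset.card_univ, nsmul_eq_mul]
    rw [mul_one_div, ← hn, div_self hn0.ne', div_one]
  · intro y
    simp only [Finset.univ_unique, Finset.sum_singleton, if_true]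
    rw [← Finset.sum_div, hsum]
    field_simp
end

section
/- Two density matrices σ1 and σ2 on ℂ^n (n ≥ 1) are objectively compatible if and only if the ranges of σ1 and σ2, viewed as linear endomorphisms of ℂ^n, have nontrivial intersection: range(σ1) ⊓ range(σ2) ≠ ⊥ (i.e. there exists a nonzero vector v ∈ ℂ^n lying in the column space of σ1 and in the column space of σ2). -/
open scoped ComplexOrder

/-- A density matrix on `ℂ^n`: a positive semidefinite matrix of trace `1`. -/
def IsDensityMatrix {n : ℕ} (σ : Matrix (Fin n) (Fin n) ℂ) : Prop :=
  σ.PosSemidef ∧ σ.trace = 1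

/-- Objective compatibility of two quantum state assignments `σ1`, `σ2` on `ℂ^n`:
there exist finite nonempty classical variables `X1`, `X2`, a hybrid state
`ρ : X1 → X2 → Matrix (Fin n) (Fin n) ℂ` (each component positive semidefinite,
total trace `1`), and outcomes `x1`, `x2` occurring with positive probability,
such that each `σᵢ` is the conditioned (normalized reduced) state given `Xᵢ = xᵢ`. -/
def QObjCompatible {n : ℕ} (σ1 σ2 : Matrix (Fin n) (Fin n) ℂ) : Prop :=
  ∃ (X1 : Type) (_ : Fintype X1) (X2 : Type) (_ : Fintype X2),
    Nonempty X1 ∧ Nonempty X2 ∧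
    ∃ (ρ : X1 → X2 → Matrix (Fin n) (Fin n) ℂ) (x1 : X1) (x2 : X2),
      (∀ a b, (ρ a b).PosSemidef) ∧
      (∑ a, ∑ b, (ρ a b).trace = 1) ∧
      0 < ((ρ x1 x2).trace).re ∧
      σ1 = ((∑ b, ρ x1 b).trace)⁻¹ • (∑ b, ρ x1 b) ∧
      σ2 = ((∑ a, ρ a x2).trace)⁻¹ • (∑ a, ρ a x2)

open Matrix

variable {n : ℕ}

lemma herm_dot {C : Matrix (Fin n) (Fin n) ℂ} (hC : C.IsHermitian)
    (x y : Fin n → ℂ) : star x ⬝ᵥ C *ᵥ y = star (C *ᵥ x) ⬝ᵥ y := by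
  rw [star_mulVec, dotProduct_mulVec, hC.eq]

lemma herm_range_mem {C : Matrix (Fin n) (Fin n) ℂ} (hC : C.IsHermitian)
    {x : Fin n → ℂ} (hx : ∀ k, C *ᵥ k = 0 → star k ⬝ᵥ x = 0) :
    x ∈ LinearMap.range (Matrix.toLin' C) := by
  set f := Matrix.toLin' C with hf
  have hfc : ∀ y, f y = C *ᵥ y := fun y => Matrix.toLin'_apply C y
  have hdisj : Disjoint (LinearMap.range f) (LinearMap.ker f) := by
    rw [Submodule.disjoint_def]
    rintro z ⟨y, rfl⟩ hz
    rw [LinearMap.mem_ker] at hz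
    have h1 : star (f y) ⬝ᵥ (f y) = 0 := by
      rw [hfc, ← herm_dot hC, hfc] at *
      rw [hz, dotProduct_zero]
    rwa [dotProduct_star_self_eq_zero] at h1
  have htop : LinearMap.range f ⊔ LinearMap.ker f = ⊤ := by
    apply Submodule.eq_top_of_disjoint _ _ _ hdisj
    exact (LinearMap.finrank_range_add_finrank_ker f).ge
  have hxmem : x ∈ LinearMap.range f ⊔ LinearMap.ker f := htop ▸ Submodule.mem_top
  obtain ⟨c, hc, k, hk, hck⟩ := Submodule.mem_sup.mp hxmem
  obtain ⟨w, rfl⟩ := hc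
  rw [LinearMap.mem_ker] at hk
  have hkC : C *ᵥ k = 0 := by rw [← hfc]; exact hk
  have h1 : star k ⬝ᵥ x = 0 := hx k hkC
  have h2 : star k ⬝ᵥ (f w) = 0 := by
    rw [hfc, herm_dot hC, hkC]; simp
  have h3 : star k ⬝ᵥ k = 0 := by
    have h4 := congrArg (fun z => star k ⬝ᵥ z) hck
    simp only [dotProduct_add, h2, zero_add] at h4
    rw [h4, h1]
  have hk0 : k = 0 := by rwa [dotProduct_star_self_eq_zero] at h3
  rw [← hck, hk0, add_zero]
  exact ⟨w, rfl⟩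


lemma psd_range_le {A C : Matrix (Fin n) (Fin n) ℂ} (hA : A.PosSemidef) (hC : C.IsHermitian)
    (h : ∀ k, C *ᵥ k = 0 → A *ᵥ k = 0) :
    LinearMap.range (Matrix.toLin' A) ≤ LinearMap.range (Matrix.toLin' C) := by
  rintro x ⟨u, rfl⟩
  rw [Matrix.toLin'_apply]
  refine herm_range_mem hC (fun k hk => ?_)
  rw [herm_dot hA.1, h k hk]
  simp

lemma psd_diag_nonneg {A : Matrix (Fin n) (Fin n) ℂ} (hA : A.PosSemidef) (i : Fin n) :
    0 ≤ A i i := by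
  simpa [Matrix.mulVec, dotProduct, Pi.single_apply] using hA.dotProduct_mulVec_nonneg (Pi.single i 1)

lemma psd_trace_nonneg {A : Matrix (Fin n) (Fin n) ℂ} (hA : A.PosSemidef) :
    0 ≤ A.trace :=
  Finset.sum_nonneg fun i _ => psd_diag_nonneg hA i

lemma psd_smul {A : Matrix (Fin n) (Fin n) ℂ} (hA : A.PosSemidef) {c : ℂ} (hc : 0 ≤ c) :
    (c • A).PosSemidef := by
  have hcr : star c = c := by
    rw [Complex.star_def, Complex.conj_eq_iff_im]
    exact ((Complex.le_def.mp hc).2).symm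
  refine Matrix.PosSemidef.of_dotProduct_mulVec_nonneg ?_ ?_
  · rw [Matrix.IsHermitian, Matrix.conjTranspose_smul, hcr, hA.1.eq]
  · intro x
    rw [Matrix.smul_mulVec, dotProduct_smul]
    exact mul_nonneg hc (hA.dotProduct_mulVec_nonneg x)

lemma psd_sum {ι : Type*} (s : Finset ι) (f : ι → Matrix (Fin n) (Fin n) ℂ)
    (h : ∀ i ∈ s, (f i).PosSemidef) : (∑ i ∈ s, f i).PosSemidef :=
  Finset.sum_induction f _ (fun _ _ ha hb => ha.add hb) Matrix.PosSemidef.zero h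

lemma outer_psd (v : Fin n → ℂ) : (Matrix.vecMulVec v (star v)).PosSemidef := by
  have : Matrix.vecMulVec v (star v)
      = Matrix.replicateCol (Fin 1) v * (Matrix.replicateCol (Fin 1) v)ᴴ := by
    rw [Matrix.conjTranspose_replicateCol]; exact Matrix.vecMulVec_eq (Fin 1) _ _
  rw [this]
  exact Matrix.posSemidef_self_mul_conjTranspose _

lemma cs_dot (a b : Fin n → ℂ) :
    Complex.normSq (star a ⬝ᵥ b) ≤ (star a ⬝ᵥ a).re * (star b ⬝ᵥ b).re := by
  let a' : EuclideanSpace ℂ (Fin n) := (WithLp.equiv 2 _).symm a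
  let b' : EuclideanSpace ℂ (Fin n) := (WithLp.equiv 2 _).symm b
  have hab : (inner ℂ a' b' : ℂ) = star a ⬝ᵥ b := by
      rw [EuclideanSpace.inner_eq_star_dotProduct, dotProduct_comm]; rfl
  have haa : (star a ⬝ᵥ a).re = ‖a'‖ ^ 2 := by
    have h : (inner ℂ a' a' : ℂ) = star a ⬝ᵥ a := by
      rw [EuclideanSpace.inner_eq_star_dotProduct, dotProduct_comm]; rfl
    rw [← h, ← RCLike.re_to_complex]
    exact inner_self_eq_norm_sq (𝕜 := ℂ) a'
  have hbb : (star b ⬝ᵥ b).re = ‖b'‖ ^ 2 := by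
    have h : (inner ℂ b' b' : ℂ) = star b ⬝ᵥ b := by
      rw [EuclideanSpace.inner_eq_star_dotProduct, dotProduct_comm]; rfl
    rw [← h, ← RCLike.re_to_complex]
    exact inner_self_eq_norm_sq (𝕜 := ℂ) b'
  have h := norm_inner_le_norm (𝕜 := ℂ) a' b'
  have h2 : ‖(inner ℂ a' b' : ℂ)‖ ^ 2 ≤ (‖a'‖ * ‖b'‖) ^ 2 :=
    pow_le_pow_left₀ (norm_nonneg _) h 2
  rw [mul_pow] at h2
  rw [haa, hbb, ← hab, ← Complex.sq_norm]
  exact h2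

lemma exists_eps {σ : Matrix (Fin n) (Fin n) ℂ} (hσ : σ.PosSemidef) {v : Fin n → ℂ}
    (hv : v ∈ LinearMap.range (Matrix.toLin' σ)) (hv0 : v ≠ 0) :
    ∃ ε : ℝ, 0 < ε ∧ (σ - (ε : ℂ) • Matrix.vecMulVec v (star v)).PosSemidef := by
  obtain ⟨w, hw⟩ := hv
  rw [Matrix.toLin'_apply] at hw
  obtain ⟨B, hB⟩ : ∃ B : Matrix (Fin n) (Fin n) ℂ, σ = Bᴴ * B := by
    open MatrixOrder in
    classical
    obtain ⟨X, hX, -, hXX⟩ :=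
      CFC.exists_sqrt_of_isSelfAdjoint_of_quasispectrumRestricts hσ.nonneg.isHermitian
        (QuasispectrumRestricts.nnreal_of_nonneg (by rw [sub_zero]; exact hσ.nonneg))
    exact ⟨X, by rw [← sub_zero σ, ← hXX, ← Matrix.star_eq_conjTranspose, hX.star_eq]⟩
  set c := star w ⬝ᵥ σ *ᵥ w with hc
  have hc0 : 0 ≤ c := hσ.dotProduct_mulVec_nonneg w
  have hcne : c ≠ 0 := by
    intro h
    exact hv0 (hw ▸ ((hσ.dotProduct_mulVec_zero_iff w).mp h))
  have hcre : 0 < c.re := by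
    rcases (Complex.le_def.mp hc0) with ⟨h1, h2⟩
    simp only [Complex.zero_re, Complex.zero_im] at h1 h2
    rcases lt_or_eq_of_le h1 with h | h
    · exact h
    · exact absurd (Complex.ext h.symm h2.symm) hcne
  refine ⟨(c.re)⁻¹, inv_pos.mpr hcre, ?_⟩
  rw [Complex.ofReal_inv]
  have hM := outer_psd v
  have hεnn : (0 : ℂ) ≤ ((c.re : ℂ))⁻¹ := by
    rw [← Complex.ofReal_inv, Complex.zero_le_real]
    exact le_of_lt (inv_pos.mpr hcre)
  refine Matrix.PosSemidef.of_dotProduct_mulVec_nonneg ?_ ?_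
  · exact hσ.1.sub (psd_smul hM hεnn).1
  · intro x
    set z := star v ⬝ᵥ x with hz
    set q := star x ⬝ᵥ σ *ᵥ x with hq
    have hq0 : 0 ≤ q := hσ.dotProduct_mulVec_nonneg x
    have hz' : z = star (B *ᵥ w) ⬝ᵥ (B *ᵥ x) := by
      rw [hz, ← hw, Matrix.star_mulVec, hσ.1.eq, hB, Matrix.dotProduct_mulVec,
        Matrix.star_mulVec, Matrix.vecMul_vecMul]
    have hc' : c = star (B *ᵥ w) ⬝ᵥ (B *ᵥ w) := by
      rw [hc, hB, ← Matrix.mulVec_mulVec, Matrix.dotProduct_mulVec, ← Matrix.star_mulVec]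
    have hq' : q = star (B *ᵥ x) ⬝ᵥ (B *ᵥ x) := by
      rw [hq, hB, ← Matrix.mulVec_mulVec, Matrix.dotProduct_mulVec, ← Matrix.star_mulVec]
    have hCS : Complex.normSq z ≤ c.re * q.re := by
      rw [hz', hc', hq']
      exact cs_dot _ _
    have hMx : (Matrix.vecMulVec v (star v)) *ᵥ x = z • v := by
      funext i
      simp [Matrix.vecMulVec_apply, Matrix.mulVec, dotProduct, hz, Finset.mul_sum,
        mul_comm, mul_assoc, mul_left_comm]
    have hform : star x ⬝ᵥ (σ - ((c.re : ℂ))⁻¹ • Matrix.vecMulVec v (star v)) *ᵥ x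
        = q - ((c.re : ℂ))⁻¹ * Complex.normSq z := by
      rw [Matrix.sub_mulVec, dotProduct_sub, Matrix.smul_mulVec,
        dotProduct_smul, hMx, dotProduct_smul]
      congr 1
      rw [smul_eq_mul, smul_eq_mul]
      congr 1
      have hsx : star x ⬝ᵥ v = starRingEnd ℂ z := by
        rw [Matrix.star_dotProduct]
        rfl
      rw [hsx, Complex.mul_conj]
    rw [hform]
    have hqim : q.im = 0 := by
      simpa using (Complex.le_def.mp hq0).2.symm
    have hqre : 0 ≤ q.re := by simpa using (Complex.le_def.mp hq0).1
    have hqeq : q = (q.re : ℂ) := Complex.ext rfl (by simp [hqim])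
    rw [hqeq]
    have hcast : ((q.re : ℂ) - ((c.re : ℂ))⁻¹ * (Complex.normSq z : ℂ))
        = ((q.re - (c.re)⁻¹ * Complex.normSq z : ℝ) : ℂ) := by
      push_cast; ring
    rw [hcast, Complex.zero_le_real]
    have hle : (c.re)⁻¹ * Complex.normSq z ≤ (c.re)⁻¹ * (c.re * q.re) :=
      mul_le_mul_of_nonneg_left hCS (le_of_lt (inv_pos.mpr hcre))
    rw [inv_mul_cancel_left₀ (ne_of_gt hcre)] at hle
    linarith

lemma cond_range {ι : Type} [Fintype ι] (ρ : ι → Matrix (Fin n) (Fin n) ℂ)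
    (hpsd : ∀ b, (ρ b).PosSemidef) (b0 : ι) (hpos : 0 < ((ρ b0).trace).re)
    {σ : Matrix (Fin n) (Fin n) ℂ} (hσ : σ = ((∑ b, ρ b).trace)⁻¹ • (∑ b, ρ b)) :
    LinearMap.range (Matrix.toLin' (ρ b0)) ≤ LinearMap.range (Matrix.toLin' σ) := by
  set S := ∑ b, ρ b with hS
  have hSpsd : S.PosSemidef := psd_sum Finset.univ _ (fun b _ => hpsd b)
  have hle : LinearMap.range (Matrix.toLin' (ρ b0)) ≤ LinearMap.range (Matrix.toLin' S) := by
    refine psd_range_le (hpsd b0) hSpsd.1 (fun k hk => ?_)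
    have hsum : S *ᵥ k = ∑ b, ρ b *ᵥ k := by
      rw [hS]
      funext j
      simp only [Matrix.mulVec, dotProduct, Matrix.sum_apply, Finset.sum_apply,
        Finset.sum_mul]
      exact Finset.sum_comm
    have h0 : ∑ b, star k ⬝ᵥ (ρ b) *ᵥ k = 0 := by
      have h1 : star k ⬝ᵥ (∑ b, ρ b *ᵥ k) = ∑ b, star k ⬝ᵥ ρ b *ᵥ k := by
        simp only [dotProduct, Finset.sum_apply, Finset.mul_sum]
        exact Finset.sum_comm
      rw [← h1, ← hsum, hk, dotProduct_zero]
    have hall := (Finset.sum_eq_zero_iff_of_nonneg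
      (fun b _ => (hpsd b).dotProduct_mulVec_nonneg k)).mp h0 b0 (Finset.mem_univ _)
    exact ((hpsd b0).dotProduct_mulVec_zero_iff k).mp hall
  have htr : S.trace ≠ 0 := by
    intro h
    have hre : 0 < S.trace.re := by
      rw [hS, Matrix.trace_sum]
      have : ∀ b, 0 ≤ ((ρ b).trace).re := fun b => by
        simpa using (Complex.le_def.mp (psd_trace_nonneg (hpsd b))).1
      calc (0:ℝ) < ((ρ b0).trace).re := hpos
        _ ≤ (∑ b, (ρ b).trace).re := by
            rw [Complex.re_sum]
            exact Finset.single_le_sum (fun b _ => this b) (Finset.mem_univ b0)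
    rw [h] at hre
    simp at hre
  have hrange : LinearMap.range (Matrix.toLin' σ) = LinearMap.range (Matrix.toLin' S) := by
    rw [hσ, _root_.map_smul]
    exact LinearMap.range_smul _ _ (inv_ne_zero htr)
  rw [hrange]
  exact hle


/-- Two density matrices on `ℂ^n` (`n ≥ 1`) are objectively compatible iff
their ranges (column spaces) have nontrivial intersection. -/
theorem qObjCompatible_iff_ranges_intersect
    {n : ℕ} (hn : 1 ≤ n) (σ1 σ2 : Matrix (Fin n) (Fin n) ℂ)
    (h1 : IsDensityMatrix σ1) (h2 : IsDensityMatrix σ2) :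
    QObjCompatible σ1 σ2 ↔
      LinearMap.range (Matrix.toLin' σ1) ⊓ LinearMap.range (Matrix.toLin' σ2) ≠ ⊥ := by
  constructor
  · rintro ⟨X1, _, X2, _, ⟨a1⟩, ⟨a2⟩, ρ, x1, x2, hpsd, htr, hpos, hσ1, hσ2⟩
    have r1 : LinearMap.range (Matrix.toLin' (ρ x1 x2)) ≤ LinearMap.range (Matrix.toLin' σ1) :=
      cond_range (fun b => ρ x1 b) (fun b => hpsd x1 b) x2 hpos hσ1
    have r2 : LinearMap.range (Matrix.toLin' (ρ x1 x2)) ≤ LinearMap.range (Matrix.toLin' σ2) :=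
      cond_range (fun a => ρ a x2) (fun a => hpsd a x2) x1 hpos hσ2
    have hρne : ρ x1 x2 ≠ 0 := by
      intro h
      rw [h] at hpos
      simp at hpos
    have hu : ∃ u, (ρ x1 x2) *ᵥ u ≠ 0 := by
      by_contra h
      push_neg at h
      apply hρne
      have h0 : Matrix.toLin' (ρ x1 x2) = 0 :=
        LinearMap.ext fun u => by rw [Matrix.toLin'_apply]; exact h u
      exact (LinearEquiv.map_eq_zero_iff Matrix.toLin').mp h0
    obtain ⟨u, hune⟩ := hu
    rw [Submodule.ne_bot_iff]
    refine ⟨(ρ x1 x2) *ᵥ u, Submodule.mem_inf.mpr ⟨?_, ?_⟩, hune⟩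
    · exact r1 ⟨u, Matrix.toLin'_apply _ u⟩
    · exact r2 ⟨u, Matrix.toLin'_apply _ u⟩
  · intro hne
    rw [Submodule.ne_bot_iff] at hne
    obtain ⟨v, hv, hv0⟩ := hne
    rw [Submodule.mem_inf] at hv
    obtain ⟨ε1, hε1, hP1⟩ := exists_eps h1.1 hv.1 hv0
    obtain ⟨ε2, hε2, hP2⟩ := exists_eps h2.1 hv.2 hv0
    set ε := min ε1 ε2 with hε
    have hεpos : 0 < ε := lt_min hε1 hε2
    set M := Matrix.vecMulVec v (star v) with hM
    have hMpsd := outer_psd v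
    have key : ∀ (σ : Matrix (Fin n) (Fin n) ℂ) (ε' : ℝ), ε ≤ ε' →
        (σ - (ε' : ℂ) • M).PosSemidef → (σ - (ε : ℂ) • M).PosSemidef := by
      intro σ ε' hle hP
      have hdecomp : σ - (ε : ℂ) • M = (σ - (ε' : ℂ) • M) + ((ε' - ε : ℝ) : ℂ) • M := by
        push_cast
        module
      rw [hdecomp]
      refine hP.add (psd_smul hMpsd ?_)
      rw [Complex.zero_le_real]
      linarith
    have hQ1 : (σ1 - (ε : ℂ) • M).PosSemidef := key σ1 ε1 (min_le_left _ _) hP1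
    have hQ2 : (σ2 - (ε : ℂ) • M).PosSemidef := key σ2 ε2 (min_le_right _ _) hP2
    set T : ℝ := ∑ i, Complex.normSq (v i) with hT
    have hMtr : M.trace = (T : ℂ) := by
      rw [hM, hT, Matrix.trace]
      push_cast
      refine Finset.sum_congr rfl fun i _ => ?_
      rw [Matrix.diag_apply, Matrix.vecMulVec_apply, Pi.star_apply, Complex.star_def,
        Complex.mul_conj]
    have hTpos : 0 < T := by
      rw [hT]
      obtain ⟨i, hi⟩ := Function.ne_iff.mp hv0
      exact Finset.sum_pos' (fun j _ => Complex.normSq_nonneg _)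
        ⟨i, Finset.mem_univ i, by simpa using Complex.normSq_pos.mpr hi⟩
    have h2inv : (0 : ℂ) ≤ (2 : ℂ)⁻¹ := by
      simpa using Complex.zero_le_real.mpr (by norm_num : (0:ℝ) ≤ 2⁻¹)
    have hεnn : (0 : ℂ) ≤ ((ε : ℝ) : ℂ) := Complex.zero_le_real.mpr hεpos.le
    refine ⟨Bool, inferInstance, Bool, inferInstance, ⟨true⟩, ⟨true⟩,
      (fun a b => (2 : ℂ)⁻¹ • (if a then (if b then (ε : ℂ) • M else σ1 - (ε : ℂ) • M)
        else (if b then σ2 - (ε : ℂ) • M else (ε : ℂ) • M))), true, true,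
      ?_, ?_, ?_, ?_, ?_⟩
    · rintro (_|_) (_|_) <;> simp only [if_true, if_false, Bool.false_eq_true] <;>
        exact psd_smul (by first
          | exact hQ1 | exact hQ2 | exact psd_smul hMpsd hεnn) h2inv
    · simp only [Fintype.sum_bool, if_true, if_false, Bool.false_eq_true, Matrix.trace_smul,
        Matrix.trace_sub, h1.2, h2.2, hMtr, smul_eq_mul]
      ring
    · simp only [if_true, Matrix.trace_smul, Matrix.trace_smul, hMtr, smul_eq_mul]
      rw [show (2 : ℂ)⁻¹ * ((ε : ℂ) * (T : ℂ)) = ((2⁻¹ * ε * T : ℝ) : ℂ) by push_cast; ring]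
      rw [Complex.ofReal_re]
      positivity
    · have hsum1 : (∑ b : Bool, (2 : ℂ)⁻¹ • (if b then (ε : ℂ) • M else σ1 - (ε : ℂ) • M))
          = (2 : ℂ)⁻¹ • σ1 := by
        rw [Fintype.sum_bool]
        simp only [if_true, if_false, Bool.false_eq_true]
        rw [← smul_add]
        congr 1
        abel
      simp only [if_true]
      rw [hsum1, Matrix.trace_smul, h1.2, smul_eq_mul, mul_one, smul_smul]
      norm_num
    · have hsum2 : (∑ a : Bool, (2 : ℂ)⁻¹ • (if a then (ε : ℂ) • M else σ2 - (ε : ℂ) • M))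
          = (2 : ℂ)⁻¹ • σ2 := by
        rw [Fintype.sum_bool]
        simp only [if_true, if_false, Bool.false_eq_true]
        rw [← smul_add]
        congr 1
        abel
      simp only [if_true]
      rw [hsum2, Matrix.trace_smul, h2.2, smul_eq_mul, mul_one, smul_smul]
      norm_num
end
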